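/- arXiv:0908.3973 — 2 statements merged into one kernel-verified Lean document; each statement's English description precedes it below -/
import Mathlib

section
/- Hurwitz's theorem: For any irrational real number ξ there exist infinitely many rational numbers p/q (with p ∈ ℤ, q a positive integer) such that |ξ − p/q| < 1/(√5 · q²). -/
set_option linter.unusedSectionVars false
set_option maxHeartbeats 800000

namespace HurwitzAux

noncomputable def hxi (ξ : ℝ) : ℕ → ℝ
  | 0 => ξ
  | n + 1 => (Int.fract (hxi ξ n))⁻¹

noncomputable def ha (ξ : ℝ) (n : ℕ) : ℤ := ⌊hxi ξ n⌋

noncomputable def hp (ξ : ℝ) : ℕ → ℤ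
  | 0 => 0
  | 1 => 1
  | n + 2 => ha ξ n * hp ξ (n + 1) + hp ξ n

noncomputable def hq (ξ : ℝ) : ℕ → ℤ
  | 0 => 1
  | 1 => 0
  | n + 2 => ha ξ n * hq ξ (n + 1) + hq ξ n

noncomputable def nu (ξ : ℝ) (n : ℕ) : ℝ :=
  hxi ξ (n + 1) + (hq ξ (n + 1) : ℝ) / (hq ξ (n + 2) : ℝ)

theorem quad {u v s : ℝ} (hu : 1 < u) (hv0 : 0 < v) (hs5 : s ^ 2 = 5) (hs2 : 2 < s)
    (h1 : u + v ≤ s) (h2 : 1 / u + 1 / v ≤ s) : s ≤ 2 * v + 1 := by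
  have hu0 : 0 < u := lt_trans zero_lt_one hu
  have h2' : u + v ≤ s * (u * v) := by
    have h3 := mul_le_mul_of_nonneg_left h2 (le_of_lt (mul_pos hu0 hv0))
    have e : u * v * (1 / u + 1 / v) = u + v := by field_simp; ring
    rw [e] at h3; linarith
  have hsv : 1 < s * v := by nlinarith
  have hquad : v ^ 2 - s * v + 1 ≤ 0 := by
    nlinarith [mul_nonneg (by linarith : (0:ℝ) ≤ s - v - u) (by linarith : (0:ℝ) ≤ s * v - 1)]
  nlinarith [hquad, sq_nonneg (s - 2 * v)]

variable {ξ : ℝ} (hξ : Irrational ξ)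
include hξ

-- (repeat earlier lemmas via import of b? inline everything later; assume they exist)
theorem irr : ∀ n, Irrational (hxi ξ n) := by
  intro n
  induction n with
  | zero => exact hξ
  | succ n ih =>
    have : Irrational (Int.fract (hxi ξ n)) := by
      rw [Int.fract]; exact ih.sub_intCast _
    exact this.inv

theorem fract_pos (n : ℕ) : 0 < Int.fract (hxi ξ n) := by
  rcases (Int.fract_nonneg (hxi ξ n)).lt_or_eq with h | h
  · exact h
  · exfalso
    have : Irrational (Int.fract (hxi ξ n)) := by
      rw [Int.fract]; exact (irr hξ n).sub_intCast _
    exact this.ne_int 0 (by exact_mod_cast h.symm)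

theorem one_lt_hxi (n : ℕ) : 1 < hxi ξ (n + 1) := by
  rw [hxi]
  exact (one_lt_inv₀ (fract_pos hξ n)).mpr (Int.fract_lt_one _)

theorem one_le_ha (n : ℕ) : 1 ≤ ha ξ (n + 1) :=
  Int.le_floor.mpr (by exact_mod_cast (one_lt_hxi hξ n).le)

theorem xi_rec (n : ℕ) : hxi ξ n = ha ξ n + (hxi ξ (n + 1))⁻¹ := by
  rw [hxi, inv_inv, ha, Int.fract]; ring

theorem hxi_pos (n : ℕ) : 0 < hxi ξ (n + 1) := lt_trans one_pos (one_lt_hxi hξ n)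

theorem hq_nonneg : ∀ n, 0 ≤ hq ξ n ∧ 0 ≤ hq ξ (n + 1) := by
  intro n
  induction n with
  | zero => simp [hq]
  | succ n ih =>
    refine ⟨ih.2, ?_⟩
    match n with
    | 0 => simp [hq]
    | m + 1 =>
      rw [hq]
      have h1 := one_le_ha hξ m
      nlinarith [ih.1, ih.2]

theorem hq_one_le : ∀ n, 1 ≤ hq ξ (n + 2) ∧ 1 ≤ hq ξ (n + 3) := by
  intro n
  induction n with
  | zero =>
    constructor
    · show (1 : ℤ) ≤ ha ξ 0 * hq ξ 1 + hq ξ 0; simp [hq]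
    · show (1 : ℤ) ≤ ha ξ 1 * hq ξ 2 + hq ξ 1
      have h1 := one_le_ha hξ 0
      have h2 : hq ξ 2 = 1 := by show ha ξ 0 * hq ξ 1 + hq ξ 0 = 1; simp [hq]
      have h3 : hq ξ 1 = 0 := rfl
      nlinarith
  | succ n ih =>
    refine ⟨ih.2, ?_⟩
    show (1 : ℤ) ≤ ha ξ (n + 2) * hq ξ (n + 3) + hq ξ (n + 2)
    have h1 := one_le_ha hξ (n + 1)
    nlinarith [ih.1, ih.2]

theorem hq_ge (n : ℕ) : (n : ℤ) ≤ hq ξ (n + 3) := by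
  induction n with
  | zero => exact_mod_cast le_trans zero_le_one (hq_one_le hξ 1).1
  | succ n ih =>
    have h : hq ξ (n + 4) = ha ξ (n + 2) * hq ξ (n + 3) + hq ξ (n + 2) := rfl
    have h1 := one_le_ha hξ (n + 1)
    have h2 := (hq_one_le hξ n).1
    have h3 := (hq_one_le hξ n).2
    push_cast
    nlinarith

theorem main_id : ∀ n, ξ * (hxi ξ n * hq ξ (n + 1) + hq ξ n) =
    hxi ξ n * hp ξ (n + 1) + hp ξ n := by
  intro n
  induction n with
  | zero => simp [hxi, hp, hq]
  | succ n ih =>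
    have hu : hxi ξ (n + 1) ≠ 0 := (hxi_pos hξ n).ne'
    rw [xi_rec hξ n] at ih
    have hp2 : (hp ξ (n + 2) : ℝ) = ha ξ n * hp ξ (n + 1) + hp ξ n := by
      rw [show hp ξ (n+2) = ha ξ n * hp ξ (n + 1) + hp ξ n from rfl]; push_cast; ring
    have hq2 : (hq ξ (n + 2) : ℝ) = ha ξ n * hq ξ (n + 1) + hq ξ n := by
      rw [show hq ξ (n+2) = ha ξ n * hq ξ (n + 1) + hq ξ n from rfl]; push_cast; ring
    rw [hp2, hq2]
    field_simp at ih ⊢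
    linear_combination ih

theorem det : ∀ n, hp ξ n * hq ξ (n + 1) - hp ξ (n + 1) * hq ξ n = (-1) ^ (n + 1) := by
  intro n
  induction n with
  | zero => simp [hp, hq]
  | succ n ih =>
    have hp2 : hp ξ (n + 2) = ha ξ n * hp ξ (n + 1) + hp ξ n := rfl
    have hq2 : hq ξ (n + 2) = ha ξ n * hq ξ (n + 1) + hq ξ n := rfl
    rw [hp2, hq2, pow_succ]
    linear_combination (-1 : ℤ) * ih

theorem nu_pos (n : ℕ) : 0 < nu ξ n := by
  have h1 := one_lt_hxi hξ n
  have h2 : (0:ℝ) ≤ (hq ξ (n+1) : ℝ) := by exact_mod_cast (hq_nonneg hξ n).2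
  have h3 : (0:ℝ) < (hq ξ (n+2) : ℝ) := by
    exact_mod_cast lt_of_lt_of_le zero_lt_one (hq_one_le hξ n).1
  have : 0 ≤ (hq ξ (n+1) : ℝ) / (hq ξ (n+2) : ℝ) := div_nonneg h2 h3.le
  rw [nu]; linarith

theorem abs_err (n : ℕ) : |ξ - (hp ξ (n + 2) : ℝ) / (hq ξ (n + 2) : ℝ)| =
    1 / ((hq ξ (n + 2) : ℝ) ^ 2 * nu ξ n) := by
  have hq2 : (0:ℝ) < (hq ξ (n+2) : ℝ) := by
    exact_mod_cast lt_of_lt_of_le zero_lt_one (hq_one_le hξ n).1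
  have hq1 : (0:ℝ) ≤ (hq ξ (n+1) : ℝ) := by exact_mod_cast (hq_nonneg hξ n).2
  have hx := one_lt_hxi hξ n
  have hD : (0:ℝ) < hxi ξ (n+1) * (hq ξ (n+2):ℝ) + (hq ξ (n+1):ℝ) := by nlinarith
  have hid : ξ * (hxi ξ (n+1) * (hq ξ (n+2):ℝ) + (hq ξ (n+1):ℝ))
      = hxi ξ (n+1) * (hp ξ (n+2):ℝ) + (hp ξ (n+1):ℝ) := main_id hξ (n + 1)
  have hdet : hp ξ (n+1) * hq ξ (n+2) - hp ξ (n+2) * hq ξ (n+1) = (-1) ^ (n+2) := det hξ (n + 1)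
  have hdetR : (hp ξ (n+1):ℝ) * (hq ξ (n+2):ℝ) - (hp ξ (n+2):ℝ) * (hq ξ (n+1):ℝ)
      = (-1) ^ (n + 2) := by exact_mod_cast hdet
  have h2 : (hq ξ (n+2):ℝ) ^ 2 * nu ξ n
      = (hq ξ (n+2):ℝ) * (hxi ξ (n+1) * (hq ξ (n+2):ℝ) + (hq ξ (n+1):ℝ)) := by
    rw [nu]; field_simp
  have key : ξ - (hp ξ (n + 2) : ℝ) / (hq ξ (n + 2) : ℝ)
      = (-1) ^ (n + 2) / ((hq ξ (n+2):ℝ) * (hxi ξ (n+1) * (hq ξ (n+2):ℝ) + (hq ξ (n+1):ℝ))) := by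
    rw [eq_div_iff (by positivity)]
    have expand : (ξ - (hp ξ (n + 2) : ℝ) / (hq ξ (n + 2) : ℝ)) *
        ((hq ξ (n+2):ℝ) * (hxi ξ (n+1) * (hq ξ (n+2):ℝ) + (hq ξ (n+1):ℝ)))
        = ξ * (hxi ξ (n+1) * (hq ξ (n+2):ℝ) + (hq ξ (n+1):ℝ)) * (hq ξ (n+2):ℝ)
          - (hp ξ (n+2):ℝ) * (hxi ξ (n+1) * (hq ξ (n+2):ℝ) + (hq ξ (n+1):ℝ)) := by
      field_simp
    rw [expand]
    linear_combination (hq ξ (n+2):ℝ) * hid + hdetR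
  rw [key, h2, abs_div, abs_pow, abs_neg, abs_one, one_pow,
    abs_of_pos (by positivity)]

theorem ratio_big (k : ℕ) (h1 : nu ξ k ≤ Real.sqrt 5) (h2 : nu ξ (k + 1) ≤ Real.sqrt 5) :
    (Real.sqrt 5 - 1) / 2 < (hq ξ (k + 2) : ℝ) / (hq ξ (k + 3) : ℝ) := by
  set s := Real.sqrt 5 with hs
  have hs5 : s ^ 2 = 5 := Real.sq_sqrt (by norm_num)
  have hs2 : 2 < s := by nlinarith [Real.sqrt_nonneg 5]
  have hq2 : (0:ℝ) < (hq ξ (k+2) : ℝ) := by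
    exact_mod_cast lt_of_lt_of_le zero_lt_one (hq_one_le hξ k).1
  have hq3 : (0:ℝ) < (hq ξ (k+3) : ℝ) := by
    exact_mod_cast lt_of_lt_of_le zero_lt_one (hq_one_le hξ k).2
  set u := hxi ξ (k + 2) with hudef
  set v := (hq ξ (k + 2) : ℝ) / (hq ξ (k + 3) : ℝ) with hvdef
  have hu : 1 < u := one_lt_hxi hξ (k + 1)
  have hv0 : 0 < v := div_pos hq2 hq3
  have huv : u + v ≤ s := h2
  have hq3eq : (hq ξ (k+3) : ℝ) = (ha ξ (k+1) : ℝ) * (hq ξ (k+2) : ℝ) + (hq ξ (k+1) : ℝ) := by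
    rw [show hq ξ (k+3) = ha ξ (k+1) * hq ξ (k+2) + hq ξ (k+1) from rfl]; push_cast; ring
  have hinv : 1 / u + 1 / v ≤ s := by
    have e1 : 1 / u = hxi ξ (k+1) - (ha ξ (k+1) : ℝ) := by
      rw [one_div]
      have := xi_rec hξ (k + 1)
      linarith [this]
    have e2 : 1 / v = (ha ξ (k+1) : ℝ) + (hq ξ (k+1) : ℝ) / (hq ξ (k+2) : ℝ) := by
      rw [hvdef, one_div_div, hq3eq]
      field_simp
    have : 1 / u + 1 / v = nu ξ k := by
      rw [e1, e2, nu]; ring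
    linarith [h1, this.le, this.ge]
  have hle : s ≤ 2 * v + 1 := quad hu hv0 hs5 hs2 huv hinv
  rcases hle.lt_or_eq with h | h
  · linarith
  · exfalso
    have hirr : Irrational s := by
      have := (Nat.prime_iff.mp (by norm_num : Nat.Prime 5))
      have h5 : Irrational (Real.sqrt (5:ℕ)) := Nat.Prime.irrational_sqrt (by norm_num)
      simpa using h5
    have : ∃ c : ℚ, (c : ℝ) = v := by
      refine ⟨(hq ξ (k+2) : ℚ) / (hq ξ (k+3) : ℚ), ?_⟩
      push_cast; rfl
    obtain ⟨c, hc⟩ := this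
    apply hirr
    exact ⟨2 * c + 1, by push_cast; rw [hc]; linarith⟩

theorem good (n : ℕ) : ∃ k, n ≤ k ∧ Real.sqrt 5 < nu ξ k := by
  by_contra hcon
  push_neg at hcon
  set s := Real.sqrt 5 with hs
  have hs5 : s ^ 2 = 5 := Real.sq_sqrt (by norm_num)
  have hs2 : 2 < s := by nlinarith [Real.sqrt_nonneg 5]
  have b0 := hcon n (le_refl n)
  have b1 := hcon (n + 1) (by omega)
  have b2 := hcon (n + 2) (by omega)
  have hA1 : (s - 1) / 2 < (hq ξ (n + 2) : ℝ) / (hq ξ (n + 3) : ℝ) := ratio_big hξ n b0 b1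
  have hA2 : (s - 1) / 2 < (hq ξ (n + 3) : ℝ) / (hq ξ (n + 4) : ℝ) := ratio_big hξ (n + 1) b1 b2
  have hq2 : (1:ℝ) ≤ (hq ξ (n+2) : ℝ) := by exact_mod_cast (hq_one_le hξ n).1
  have hq3 : (1:ℝ) ≤ (hq ξ (n+3) : ℝ) := by exact_mod_cast (hq_one_le hξ n).2
  have hq4 : (1:ℝ) ≤ (hq ξ (n+4) : ℝ) := by exact_mod_cast (hq_one_le hξ (n+2)).1
  have ha2 : (1:ℝ) ≤ (ha ξ (n+2) : ℝ) := by exact_mod_cast one_le_ha hξ (n + 1)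
  have hq4eq : (hq ξ (n+4) : ℝ) = (ha ξ (n+2) : ℝ) * (hq ξ (n+3) : ℝ) + (hq ξ (n+2) : ℝ) := by
    rw [show hq ξ (n+4) = ha ξ (n+2) * hq ξ (n+3) + hq ξ (n+2) from rfl]; push_cast; ring
  have hq3p : (0:ℝ) < (hq ξ (n+3) : ℝ) := by linarith
  have hq4p : (0:ℝ) < (hq ξ (n+4) : ℝ) := by linarith
  have hA1' : (s - 1) / 2 * (hq ξ (n+3) : ℝ) < (hq ξ (n+2) : ℝ) :=
    (lt_div_iff₀ hq3p).mp hA1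
  have hA2' : (s - 1) / 2 * (hq ξ (n+4) : ℝ) < (hq ξ (n+3) : ℝ) :=
    (lt_div_iff₀ hq4p).mp hA2
  have hs1 : (0:ℝ) < (s - 1) / 2 := by linarith
  have e12 : (s + 1) / 2 * (hq ξ (n+3) : ℝ) < (hq ξ (n+4) : ℝ) := by nlinarith
  have e3 := mul_lt_mul_of_pos_left e12 hs1
  nlinarith [e3, hA2', hs5, hq3]

theorem exists_good (n : ℕ) : ∃ r : ℚ,
    |ξ - (r : ℝ)| < 1 / (Real.sqrt 5 * (r.den : ℝ) ^ 2) ∧ n ≤ r.den := by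
  obtain ⟨k', hk1, hknu⟩ := good hξ (n + 1)
  obtain ⟨j, rfl⟩ : ∃ j, k' = j + 1 := ⟨k' - 1, by omega⟩
  set k := j + 1 with hk
  -- coprimality of hp (k+2), hq (k+2)
  have hdet : hp ξ (k+1) * hq ξ (k+2) - hp ξ (k+2) * hq ξ (k+1) = (-1) ^ (k+2) := det hξ (k+1)
  have hsq : ((-1:ℤ) ^ (k+2)) ^ 2 = 1 := by
    rw [← pow_mul, mul_comm, pow_mul]; norm_num
  have hcop : IsCoprime (hp ξ (k+2)) (hq ξ (k+2)) :=
    ⟨-(((-1:ℤ) ^ (k+2)) * hq ξ (k+1)), ((-1:ℤ) ^ (k+2)) * hp ξ (k+1), by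
      linear_combination ((-1:ℤ) ^ (k+2)) * hdet + hsq⟩
  have hcop' : Nat.Coprime (hp ξ (k+2)).natAbs (hq ξ (k+2)).natAbs :=
    Int.isCoprime_iff_gcd_eq_one.mp hcop
  have hq2pos : (0:ℤ) < hq ξ (k+2) := lt_of_lt_of_le zero_lt_one (hq_one_le hξ k).1
  set r : ℚ := (hp ξ (k+2) : ℚ) / (hq ξ (k+2) : ℚ) with hr
  have hden : ((r.den : ℤ)) = hq ξ (k+2) := Rat.den_div_eq_of_coprime hq2pos hcop'
  have hdenR : ((r.den : ℝ)) = ((hq ξ (k+2) : ℤ) : ℝ) := by exact_mod_cast hden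
  have hcast : (r : ℝ) = (hp ξ (k+2) : ℝ) / (hq ξ (k+2) : ℝ) := by
    rw [hr]; push_cast; ring
  have hq2R : (0:ℝ) < ((hq ξ (k+2) : ℤ) : ℝ) := by exact_mod_cast hq2pos
  have hs0 : (0:ℝ) < Real.sqrt 5 := by positivity
  refine ⟨r, ?_, ?_⟩
  · rw [hcast, abs_err hξ k, hdenR]
    rw [div_lt_div_iff₀ (mul_pos (pow_pos hq2R 2) (nu_pos hξ k)) (by positivity)]
    have : Real.sqrt 5 * ((hq ξ (k+2):ℤ):ℝ) ^ 2 < nu ξ k * ((hq ξ (k+2):ℤ):ℝ) ^ 2 := by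
      apply mul_lt_mul_of_pos_right hknu
      positivity
    nlinarith [this]
  · -- r.den = hq (k+2) = hq (j+3) ≥ j ≥ n
    have hge : (j : ℤ) ≤ hq ξ (j + 3) := hq_ge hξ j
    have : (n : ℤ) ≤ (r.den : ℤ) := by
      rw [hden]
      have : hq ξ (k + 2) = hq ξ (j + 3) := by rw [hk]
      rw [this]
      omega
    exact_mod_cast this

end HurwitzAux

/-- Hurwitz's theorem: for any irrational real `ξ` there are infinitely many
rationals `p/q` with `|ξ - p/q| < 1/(√5 q²)`. -/
theorem hurwitz (ξ : ℝ) (hξ : Irrational ξ) :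
    {r : ℚ | |ξ - (r : ℝ)| < 1 / (Real.sqrt 5 * (r.den : ℝ) ^ 2)}.Infinite := by
  by_contra h
  rw [Set.not_infinite] at h
  obtain ⟨N, hN⟩ := (h.image Rat.den).bddAbove
  obtain ⟨r, hr, hrden⟩ := HurwitzAux.exists_good hξ (N + 1)
  have := hN (Set.mem_image_of_mem Rat.den hr)
  omega
end

section
/- Khintchine's rigidity lemma: Let ξ be a real number. Assume there exists a positive integer N₀ such that for each integer N ≥ N₀ there exist integers a and b with 1 ≤ a < N and |aξ − b| < 1/(2N). Then ξ is rational, and moreover for every integer N ≥ N₀, every pair of integers (a, b) with 1 ≤ a < N and |aξ − b| < 1/(2N) satisfies aξ = b. -/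
private lemma cross_eq (ξ : ℝ) (a b a' b' : ℤ) (ha : 0 < a) (ha' : 0 < a') (ε ε' : ℝ)
    (e : |(a:ℝ)*ξ - b| < ε) (e' : |(a':ℝ)*ξ - b'| < ε')
    (hle : (a:ℝ)*ε' + (a':ℝ)*ε ≤ 1) : a * b' = a' * b := by
  have ha0 : (0:ℝ) < a := by exact_mod_cast ha
  have ha'0 : (0:ℝ) < a' := by exact_mod_cast ha'
  have key : |(a:ℝ)*b' - (a':ℝ)*b| < 1 := by
    have h1 : (a:ℝ)*b' - (a':ℝ)*b = (a:ℝ)*((b':ℝ) - (a':ℝ)*ξ) + (a':ℝ)*((a:ℝ)*ξ - b) := by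
      ring
    have h2 : |(a:ℝ)*b' - (a':ℝ)*b| ≤ (a:ℝ)*|(a':ℝ)*ξ - b'| + (a':ℝ)*|(a:ℝ)*ξ - b| := by
      rw [h1]
      refine (abs_add_le _ _).trans ?_
      rw [abs_mul, abs_mul, abs_of_pos ha0, abs_of_pos ha'0, abs_sub_comm ((b':ℝ))]
    have h3 : (a:ℝ)*|(a':ℝ)*ξ - b'| + (a':ℝ)*|(a:ℝ)*ξ - b| < (a:ℝ)*ε' + (a':ℝ)*ε := by
      apply add_lt_add
      · exact (mul_lt_mul_iff_right₀ ha0).mpr e'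
      · exact (mul_lt_mul_iff_right₀ ha'0).mpr e
    linarith
  have key2 : |((a*b' - a'*b : ℤ) : ℝ)| < 1 := by push_cast; exact key
  have key3 : |a*b' - a'*b| < 1 := by exact_mod_cast key2
  have h0 : a*b' - a'*b = 0 := Int.abs_lt_one_iff.mp key3
  linarith

/-- Khintchine's rigidity lemma. -/
theorem khintchine_rigidity (ξ : ℝ) (N₀ : ℕ) (hN₀ : 0 < N₀)
    (h : ∀ N : ℕ, N₀ ≤ N → ∃ a b : ℤ, 1 ≤ a ∧ a < (N : ℤ) ∧
      |(a : ℝ) * ξ - (b : ℝ)| < 1 / (2 * N)) :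
    (∃ r : ℚ, ξ = (r : ℝ)) ∧
      ∀ N : ℕ, N₀ ≤ N → ∀ a b : ℤ, 1 ≤ a → a < (N : ℤ) →
        |(a : ℝ) * ξ - (b : ℝ)| < 1 / (2 * N) → (a : ℝ) * ξ = (b : ℝ) := by
  choose A B hA1 hA2 hE using h
  have hApos : ∀ N (hN : N₀ ≤ N), (0:ℝ) < (A N hN : ℝ) := fun N hN => by
    exact_mod_cast lt_of_lt_of_le zero_lt_one (hA1 N hN)
  set c : ℝ := (B N₀ le_rfl : ℝ) / (A N₀ le_rfl : ℝ) with hc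
  have hconst : ∀ N (hN : N₀ ≤ N), (B N hN : ℝ) / (A N hN : ℝ) = c := by
    intro N hN
    induction N, hN using Nat.le_induction with
    | base => rfl
    | succ N hN ih =>
      have hN1 : N₀ ≤ N + 1 := Nat.le_succ_of_le hN
      have hNge : 2 ≤ N := by
        have := hA1 N hN; have := hA2 N hN; omega
      have hNR : (2:ℝ) ≤ (N:ℝ) := by exact_mod_cast hNge
      have hcross : (A N hN) * (B (N+1) hN1) = (A (N+1) hN1) * (B N hN) := by
        apply cross_eq ξ _ _ _ _ (lt_of_lt_of_le zero_lt_one (hA1 N hN))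
          (lt_of_lt_of_le zero_lt_one (hA1 (N+1) hN1)) (1/(2*(N:ℝ))) (1/(2*((N:ℝ)+1)))
        · exact hE N hN
        · have e' := hE (N+1) hN1
          push_cast at e'
          exact e'
        · have haN : (A N hN : ℝ) ≤ (N:ℝ) - 1 := by
            have hz : (A N hN : ℤ) ≤ (N:ℤ) - 1 := by linarith [hA2 N hN]
            have : ((A N hN : ℤ) : ℝ) ≤ (((N:ℤ) - 1 : ℤ) : ℝ) := by exact_mod_cast hz
            push_cast at this
            linarith
          have haN1 : (A (N+1) hN1 : ℝ) ≤ (N:ℝ) := by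
            have h' := hA2 (N+1) hN1
            have hz : (A (N+1) hN1 : ℤ) ≤ (N:ℤ) := by
              push_cast at h'; omega
            exact_mod_cast hz
          have hpos1 : (0:ℝ) < 2*(N:ℝ) := by linarith
          have hpos2 : (0:ℝ) < 2*((N:ℝ)+1) := by linarith
          have e1 : (A N hN : ℝ) * (1/(2*((N:ℝ)+1))) ≤ 1/2 := by
            rw [mul_one_div, div_le_div_iff₀ hpos2 (by norm_num)]
            linarith
          have e2 : (A (N+1) hN1 : ℝ) * (1/(2*(N:ℝ))) ≤ 1/2 := by
            rw [mul_one_div, div_le_div_iff₀ hpos1 (by norm_num)]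
            linarith
          linarith
      have hAe : (A N hN : ℝ) ≠ 0 := ne_of_gt (hApos N hN)
      have hAe1 : (A (N+1) hN1 : ℝ) ≠ 0 := ne_of_gt (hApos (N+1) hN1)
      rw [← ih, div_eq_div_iff hAe1 hAe]
      have : (A N hN : ℝ) * (B (N+1) hN1 : ℝ) = (A (N+1) hN1 : ℝ) * (B N hN : ℝ) := by
        exact_mod_cast hcross
      linarith
  have hclose : ∀ N (hN : N₀ ≤ N), |ξ - c| < 1/(2*(N:ℝ)) := by
    intro N hN
    have hB : (B N hN : ℝ) = (A N hN : ℝ) * c := by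
      rw [← hconst N hN]; field_simp [(hApos N hN).ne']
    have he := hE N hN
    rw [hB] at he
    have hfac : (A N hN : ℝ) * ξ - (A N hN : ℝ) * c = (A N hN : ℝ) * (ξ - c) := by ring
    rw [hfac, abs_mul, abs_of_pos (hApos N hN)] at he
    have hA1R : (1:ℝ) ≤ (A N hN : ℝ) := by exact_mod_cast hA1 N hN
    have hle : |ξ - c| ≤ (A N hN : ℝ) * |ξ - c| := le_mul_of_one_le_left (abs_nonneg _) hA1R
    calc |ξ - c| ≤ (A N hN : ℝ) * |ξ - c| := hle
      _ < 1 / (2 * N) := he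
  have hxc : ξ = c := by
    by_contra hne
    have hd : 0 < |ξ - c| := abs_pos.mpr (sub_ne_zero.mpr hne)
    obtain ⟨N, hNgt⟩ := exists_nat_gt (max (N₀:ℝ) (1/|ξ - c|))
    have hN₀N : N₀ ≤ N := by
      have : (N₀:ℝ) < N := (le_max_left _ _).trans_lt hNgt
      exact_mod_cast this.le
    have hNd : 1/|ξ - c| < (N:ℝ) := (le_max_right _ _).trans_lt hNgt
    have hNpos : (0:ℝ) < N := lt_trans (by positivity) hNd
    have h1 : 1/(2*(N:ℝ)) < |ξ - c| := by
      rw [div_lt_iff₀ (by linarith)]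
      rw [div_lt_iff₀ hd] at hNd
      nlinarith
    exact absurd (hclose N hN₀N) (not_lt.mpr h1.le)
  constructor
  · exact ⟨(B N₀ le_rfl : ℚ) / (A N₀ le_rfl : ℚ), by rw [hxc, hc]; push_cast; ring⟩
  · intro N hN a b ha haN he
    have hcross : a * (B N hN) = (A N hN) * b := by
      apply cross_eq ξ _ _ _ _ (lt_of_lt_of_le zero_lt_one ha)
        (lt_of_lt_of_le zero_lt_one (hA1 N hN)) (1/(2*(N:ℝ))) (1/(2*(N:ℝ)))
      · exact he
      · exact hE N hN
      · have hNge : 2 ≤ N := by have := hA1 N hN; have := hA2 N hN; omega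
        have hNR : (2:ℝ) ≤ (N:ℝ) := by exact_mod_cast hNge
        have h1 : (a:ℝ) ≤ (N:ℝ) - 1 := by
          have hz : a ≤ (N:ℤ) - 1 := by linarith
          have : ((a:ℤ) : ℝ) ≤ (((N:ℤ) - 1 : ℤ) : ℝ) := by exact_mod_cast hz
          push_cast at this
          linarith
        have h2 : (A N hN : ℝ) ≤ (N:ℝ) - 1 := by
          have hz : (A N hN : ℤ) ≤ (N:ℤ) - 1 := by linarith [hA2 N hN]
          have : ((A N hN : ℤ) : ℝ) ≤ (((N:ℤ) - 1 : ℤ) : ℝ) := by exact_mod_cast hz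
          push_cast at this
          linarith
        have hpos : (0:ℝ) < 2*(N:ℝ) := by linarith
        rw [mul_one_div, mul_one_div, ← add_div, div_le_one hpos]
        linarith
    have hB : (B N hN : ℝ) = (A N hN : ℝ) * ξ := by
      rw [hxc]
      rw [← hconst N hN]; field_simp [(hApos N hN).ne']
    have hcR : (a:ℝ) * (B N hN : ℝ) = (A N hN : ℝ) * b := by exact_mod_cast hcross
    rw [hB] at hcR
    have hane : (A N hN : ℝ) ≠ 0 := (hApos N hN).ne'
    have hfin : (A N hN : ℝ) * ((a:ℝ) * ξ) = (A N hN : ℝ) * b := by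
      ring_nf; ring_nf at hcR; linarith
    exact mul_left_cancel₀ hane hfin
end
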